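/- arXiv:2306.01722 — 2 statements merged into one kernel-verified Lean document; each statement's English description precedes it below -/
import Mathlib

section
/- Let A be a filtered colimit of rings A_i with colimit maps φ_i : A_i → A, and fix an index i_0. Let B = A_{i_0}[x_1,...,x_n]/(F_1,...,F_m) and C a finitely generated A_{i_0}-algebra. If φ, ψ : B → C are two A_{i_0}-algebra maps such that the induced maps B ⊗_{A_{i_0}} A → C ⊗_{A_{i_0}} A are equal, then there exists i_1 ≥ i_0 such that the induced maps B ⊗_{A_{i_0}} A_{i_1} → C ⊗_{A_{i_0}} A_{i_1} are already equal. -/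
open TensorProduct

section Aux

variable {ι : Type} [Preorder ι] [IsDirected ι (· ≤ ·)] [Nonempty ι]
    (G : ι → Type) [∀ i, CommRing (G i)]
    (f : ∀ i j, i ≤ j → G i →+* G j)
    [DirectedSystem G fun i j h => f i j h] (i₀ : ι)
    {C : Type} [CommRing C] [Algebra (G i₀) C]

/-- The transition map at a later stage, as a `G i₀`-linear map. -/
def stageLinMap {i j : ι} (hi : i₀ ≤ i) (hj : i₀ ≤ j) (hij : i ≤ j) :
    letI := (f i₀ i hi).toAlgebra
    letI := (f i₀ j hj).toAlgebra
    G i →ₗ[G i₀] G j :=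
  letI := (f i₀ i hi).toAlgebra
  letI := (f i₀ j hj).toAlgebra
  { toFun := f i j hij
    map_add' := map_add _
    map_smul' := fun a x => by
      simp only [RingHom.id_apply, Algebra.smul_def, map_mul,
        RingHom.algebraMap_toAlgebra]
      congr 1
      exact DirectedSystem.map_map (f := fun i j h => f i j h) hi hij a }

set_option synthInstance.maxHeartbeats 1000000 in
set_option maxHeartbeats 2000000 in
theorem tmul_one_eq_zero_at_stage (c : C)
    (h : letI : Algebra (G i₀) (Ring.DirectLimit G fun i j h => f i j h) :=
        (Ring.DirectLimit.of G (fun i j h => f i j h) i₀).toAlgebra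
      (c ⊗ₜ[G i₀] (1 : Ring.DirectLimit G fun i j h => f i j h)) = 0) :
    ∃ i₁, ∃ hle : i₀ ≤ i₁,
      letI : Algebra (G i₀) (G i₁) := (f i₀ i₁ hle).toAlgebra
      (c ⊗ₜ[G i₀] (1 : G i₁)) = 0 := by
  classical
  letI : Algebra (G i₀) (Ring.DirectLimit G fun i j h => f i j h) :=
    (Ring.DirectLimit.of G (fun i j h => f i j h) i₀).toAlgebra
  letI : ∀ i : {i : ι // i₀ ≤ i}, Algebra (G i₀) (G i.1) := fun i => (f i₀ i.1 i.2).toAlgebra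
  haveI : IsDirected {i : ι // i₀ ≤ i} (· ≤ ·) := by
    constructor
    rintro ⟨a, ha⟩ ⟨b, hb⟩
    obtain ⟨c, hac, hbc⟩ := exists_ge_ge a b
    exact ⟨⟨c, ha.trans hac⟩, hac, hbc⟩
  haveI : Nonempty {i : ι // i₀ ≤ i} := ⟨⟨i₀, le_rfl⟩⟩
  -- the directed system of `G i₀`-modules indexed by `{i // i₀ ≤ i}`
  set M : {i : ι // i₀ ≤ i} → Type := fun i => G i.1 with hM
  let f' : ∀ i j : {i : ι // i₀ ≤ i}, i ≤ j → M i →ₗ[G i₀] M j :=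
    fun i j hij => stageLinMap G f i₀ i.2 j.2 hij
  haveI : DirectedSystem M fun i j h => f' i j h := by
    constructor
    · intro i x
      exact DirectedSystem.map_self (f := fun i j h => f i j h) x
    · intro i j k hij hjk x
      exact DirectedSystem.map_map (f := fun i j h => f i j h) hij hjk x
  -- the canonical linear map from the module direct limit to the ring direct limit
  let L : Module.DirectLimit M f' →ₗ[G i₀] Ring.DirectLimit G fun i j h => f i j h :=
    Module.DirectLimit.lift _ _ _ _
      (fun i =>
        { toFun := Ring.DirectLimit.of G (fun i j h => f i j h) i.1
          map_add' := map_add _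
          map_smul' := fun a x => by
            simp only [RingHom.id_apply, Algebra.smul_def, map_mul,
              RingHom.algebraMap_toAlgebra]
            congr 1
            exact Ring.DirectLimit.of_f i.2 a })
      (fun i j hij x => by
        exact Ring.DirectLimit.of_f (f := fun i j h => f i j h) hij x)
  have hL : Function.Bijective L := by
    constructor
    · intro x y hxy
      rw [← sub_eq_zero, ← map_sub] at hxy
      rw [← sub_eq_zero]
      obtain ⟨i, z, hz⟩ := Module.DirectLimit.exists_of (x - y)
      rw [← hz] at hxy ⊢
      have e : L (Module.DirectLimit.of (G i₀) _ M f' i z) =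
          Ring.DirectLimit.of G (fun i j h => f i j h) i.1 z := Module.DirectLimit.lift_of ..
      rw [e] at hxy
      obtain ⟨j, hij, hz'⟩ := Ring.DirectLimit.of.zero_exact hxy
      have hj : i₀ ≤ j := i.2.trans hij
      calc Module.DirectLimit.of (G i₀) _ M f' i z
          = Module.DirectLimit.of (G i₀) _ M f' ⟨j, hj⟩ (f' i ⟨j, hj⟩ hij z) :=
            (Module.DirectLimit.of_f).symm
        _ = 0 := by
            have : f' i ⟨j, hj⟩ hij z = 0 := hz'
            rw [this, map_zero]
    · intro z
      obtain ⟨i, x, rfl⟩ := Ring.DirectLimit.exists_of z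
      obtain ⟨k, hik, hk⟩ := exists_ge_ge i i₀
      refine ⟨Module.DirectLimit.of (G i₀) _ M f' ⟨k, hk⟩ (f i k hik x), ?_⟩
      refine (Module.DirectLimit.lift_of ..).trans ?_
      exact Ring.DirectLimit.of_f hik x
  let E := LinearEquiv.ofBijective L hL
  have hE1 : (c ⊗ₜ[G i₀] Module.DirectLimit.of (G i₀) _ M f' ⟨i₀, le_rfl⟩ 1 :
      C ⊗[G i₀] Module.DirectLimit M f') = 0 := by
    have := congrArg (LinearEquiv.lTensor C E).symm
      (show (LinearEquiv.lTensor C E)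
          (c ⊗ₜ[G i₀] Module.DirectLimit.of (G i₀) _ M f' ⟨i₀, le_rfl⟩ 1) = 0 by
        rw [LinearEquiv.lTensor_tmul]
        have : E (Module.DirectLimit.of (G i₀) _ M f' ⟨i₀, le_rfl⟩ 1)
            = (1 : Ring.DirectLimit G fun i j h => f i j h) := by
          show L _ = _
          refine (Module.DirectLimit.lift_of ..).trans ?_
          exact map_one (Ring.DirectLimit.of G (fun i j h => f i j h) i₀)
        rw [this]
        exact h)
    simpa using this
  haveI : DirectedSystem (fun i : {i : ι // i₀ ≤ i} => C ⊗[G i₀] M i)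
      (fun i j h => LinearMap.lTensor C (f' i j h)) := by
    constructor
    · intro i x
      have h0 : f' i i le_rfl = LinearMap.id := by
        ext z
        exact DirectedSystem.map_self (f := fun i j h => f' i j h) z
      rw [h0, LinearMap.lTensor_id, LinearMap.id_apply]
    · intro k j i hij hjk x
      rw [← LinearMap.comp_apply, ← LinearMap.lTensor_comp]
      have h1 : f' j k hjk ∘ₗ f' i j hij = f' i k (hij.trans hjk) := by
        ext z
        exact DirectedSystem.map_map (f := fun i j h => f' i j h) hij hjk z
      rw [h1]
  have hE2 := congrArg (directLimitRight f' C) hE1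
  rw [map_zero, directLimitRight_tmul_of] at hE2
  obtain ⟨j, hij, hz⟩ := Module.DirectLimit.of.zero_exact hE2
  refine ⟨j.1, j.2, ?_⟩
  have := hz
  rw [LinearMap.lTensor_tmul] at this
  have h1 : f' ⟨i₀, le_rfl⟩ j hij 1 = 1 := map_one (f i₀ j.1 hij)
  rwa [h1] at this

theorem tmul_one_persist {i₁ j : ι} (h1 : i₀ ≤ i₁) (h2 : i₁ ≤ j) (c : C)
    (h : letI := (f i₀ i₁ h1).toAlgebra
      (c ⊗ₜ[G i₀] (1 : G i₁)) = 0) :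
    letI := (f i₀ j (h1.trans h2)).toAlgebra
    (c ⊗ₜ[G i₀] (1 : G j)) = 0 := by
  letI := (f i₀ i₁ h1).toAlgebra
  letI := (f i₀ j (h1.trans h2)).toAlgebra
  have h3 := congrArg (LinearMap.lTensor C (stageLinMap G f i₀ h1 (h1.trans h2) h2)) h
  rw [map_zero, LinearMap.lTensor_tmul] at h3
  rwa [show stageLinMap G f i₀ h1 (h1.trans h2) h2 1 = 1 from map_one (f i₁ j h2)] at h3

end Aux

set_option maxHeartbeats 2000000 in
set_option synthInstance.maxHeartbeats 1000000 in
/-- Let `A = colim A_i` be a filtered colimit of rings, fix `i₀`, let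
`B = A_{i₀}[x_1,...,x_n]/(F_1,...,F_m)` be a finitely presented `A_{i₀}`-algebra and `C` a
finitely generated `A_{i₀}`-algebra. If two `A_{i₀}`-algebra maps `φ, ψ : B → C` induce equal
maps after base change to `A`, then they induce equal maps after base change to some finite
stage `A_{i₁}` with `i₁ ≥ i₀`. -/
theorem algHom_eq_of_baseChange_eq_at_finite_stage
    {ι : Type} [Preorder ι] [IsDirected ι (· ≤ ·)] [Nonempty ι]
    (G : ι → Type) [∀ i, CommRing (G i)]
    (f : ∀ i j, i ≤ j → G i →+* G j)
    [DirectedSystem G fun i j h => f i j h]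
    (i₀ : ι) {n m : ℕ} (F : Fin m → MvPolynomial (Fin n) (G i₀))
    {C : Type} [CommRing C] [Algebra (G i₀) C] (hC : Algebra.FiniteType (G i₀) C)
    (φ ψ : (MvPolynomial (Fin n) (G i₀) ⧸ Ideal.span (Set.range F)) →ₐ[G i₀] C)
    (heq :
      letI : Algebra (G i₀) (Ring.DirectLimit G fun i j h => f i j h) :=
        (Ring.DirectLimit.of G (fun i j h => f i j h) i₀).toAlgebra
      ∀ b, (Algebra.TensorProduct.includeLeft :
          C →ₐ[G i₀] C ⊗[G i₀] (Ring.DirectLimit G fun i j h => f i j h)) (φ b) =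
        (Algebra.TensorProduct.includeLeft :
          C →ₐ[G i₀] C ⊗[G i₀] (Ring.DirectLimit G fun i j h => f i j h)) (ψ b)) :
    ∃ i₁, ∃ h : i₀ ≤ i₁,
      letI : Algebra (G i₀) (G i₁) := (f i₀ i₁ h).toAlgebra
      ∀ b, (Algebra.TensorProduct.includeLeft : C →ₐ[G i₀] C ⊗[G i₀] (G i₁)) (φ b) =
        (Algebra.TensorProduct.includeLeft : C →ₐ[G i₀] C ⊗[G i₀] (G i₁)) (ψ b) := by
  classical
  letI : Algebra (G i₀) (Ring.DirectLimit G fun i j h => f i j h) :=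
    (Ring.DirectLimit.of G (fun i j h => f i j h) i₀).toAlgebra
  have key : ∀ k : Fin n, ∃ i₁, ∃ hle : i₀ ≤ i₁,
      letI : Algebra (G i₀) (G i₁) := (f i₀ i₁ hle).toAlgebra
      ((φ (Ideal.Quotient.mk (Ideal.span (Set.range F)) (MvPolynomial.X k)) -
        ψ (Ideal.Quotient.mk (Ideal.span (Set.range F)) (MvPolynomial.X k)))
        ⊗ₜ[G i₀] (1 : G i₁)) = 0 := by
    intro k
    refine tmul_one_eq_zero_at_stage G f i₀ _ ?_
    have h0 := heq (Ideal.Quotient.mk (Ideal.span (Set.range F)) (MvPolynomial.X k))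
    rw [Algebra.TensorProduct.includeLeft_apply, Algebra.TensorProduct.includeLeft_apply] at h0
    rw [TensorProduct.sub_tmul, h0, sub_self]
  choose idx hidx hzero using key
  obtain ⟨i₂, hi₂⟩ := Finset.exists_le (Finset.univ.image idx)
  obtain ⟨i₁, hi₂₁, h01⟩ := exists_ge_ge i₂ i₀
  have hle : ∀ k : Fin n, idx k ≤ i₁ :=
    fun k => (hi₂ (idx k) (Finset.mem_image_of_mem idx (Finset.mem_univ k))).trans hi₂₁
  refine ⟨i₁, h01, ?_⟩
  letI : Algebra (G i₀) (G i₁) := (f i₀ i₁ h01).toAlgebra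
  have hgen : ∀ k : Fin n,
      (Algebra.TensorProduct.includeLeft : C →ₐ[G i₀] C ⊗[G i₀] (G i₁))
          (φ (Ideal.Quotient.mk (Ideal.span (Set.range F)) (MvPolynomial.X k))) =
      (Algebra.TensorProduct.includeLeft : C →ₐ[G i₀] C ⊗[G i₀] (G i₁))
          (ψ (Ideal.Quotient.mk (Ideal.span (Set.range F)) (MvPolynomial.X k))) := by
    intro k
    have h1 := tmul_one_persist G f i₀ (hidx k) (hle k) _ (hzero k)
    rw [TensorProduct.sub_tmul, sub_eq_zero] at h1
    simpa [Algebra.TensorProduct.includeLeft_apply] using h1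
  have hΦΨ :
      ((Algebra.TensorProduct.includeLeft : C →ₐ[G i₀] C ⊗[G i₀] (G i₁)).comp φ).comp
        (Ideal.Quotient.mkₐ (G i₀) (Ideal.span (Set.range F))) =
      ((Algebra.TensorProduct.includeLeft : C →ₐ[G i₀] C ⊗[G i₀] (G i₁)).comp ψ).comp
        (Ideal.Quotient.mkₐ (G i₀) (Ideal.span (Set.range F))) := by
    apply MvPolynomial.algHom_ext
    intro k
    simpa using hgen k
  intro b
  obtain ⟨p, rfl⟩ := Ideal.Quotient.mkₐ_surjective (G i₀) (Ideal.span (Set.range F)) b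
  exact DFunLike.congr_fun hΦΨ p
end

section
/- Let A be a ring, I ⊆ A an ideal, and write A as the filtered union of its finitely generated ℤ-subalgebras A_λ, with I_λ = I ∩ A_λ. Let (A_λ^h, I_λ^h) be the Henselization of the pair (A_λ, I_λ). Then the canonical maps exhibit A = colim_λ A_λ^h and I = colim_λ I_λ^h, where the colimit is over the filtered system of subalgebras, provided (A, I) is itself a Henselian pair. -/
universe u v

theorem Subalgebra.FG.sup' {R A : Type*} [CommSemiring R] [CommSemiring A] [Algebra R A]
    {S T : Subalgebra R A} (hS : S.FG) (hT : T.FG) : (S ⊔ T).FG := by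
  classical
  obtain ⟨s, hs⟩ := hS; obtain ⟨t, ht⟩ := hT
  exact ⟨s ∪ t, by rw [Finset.coe_union, Algebra.adjoin_union, hs, ht]⟩


theorem isUnit_mk_iff {R : Type*} [CommRing R] {J : Ideal R} {z : R} :
    IsUnit (Ideal.Quotient.mk J z) ↔ ∃ c, c * z - 1 ∈ J := by
  constructor
  · rintro ⟨v, hv⟩
    obtain ⟨c, hc⟩ := Ideal.Quotient.mk_surjective (↑v⁻¹ : R ⧸ J)
    refine ⟨c, ?_⟩
    rw [← Ideal.Quotient.eq_zero_iff_mem]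
    rw [map_sub, map_mul, map_one, hc, ← hv]
    simp
  · rintro ⟨c, hc⟩
    refine IsUnit.of_mul_eq_one (Ideal.Quotient.mk J c) ?_
    rw [← map_mul, mul_comm, ← sub_eq_zero, ← map_one (Ideal.Quotient.mk J), ← map_sub,
      Ideal.Quotient.eq_zero_iff_mem]
    exact hc

theorem HenselianRing.of_ringHom_inv {S T : Type*} [CommRing S] [CommRing T]
    (ψ : S →+* T) (φ : T →+* S) (h1 : ∀ s, φ (ψ s) = s) (h2 : ∀ t, ψ (φ t) = t)
    (Is : Ideal S) (h : HenselianRing S Is) : HenselianRing T (Is.map ψ) := by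
  have hcomp : φ.comp ψ = RingHom.id S := RingHom.ext h1
  have hmem : ∀ x : T, x ∈ Is.map ψ ↔ φ x ∈ Is := by
    intro x
    constructor
    · intro hx
      have := Ideal.mem_map_of_mem φ hx
      rwa [Ideal.map_map, hcomp, Ideal.map_id] at this
    · intro hx
      have := Ideal.mem_map_of_mem ψ hx
      rwa [h2] at this
  have hiu : ∀ z : T, IsUnit (Ideal.Quotient.mk (Is.map ψ) z) →
      IsUnit (Ideal.Quotient.mk Is (φ z)) := by
    intro z hz
    rw [isUnit_mk_iff] at hz ⊢
    obtain ⟨c, hc⟩ := hz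
    exact ⟨φ c, by rw [← map_mul, ← map_one φ, ← map_sub]; exact (hmem _).mp hc⟩
  constructor
  · intro x hx
    rw [Ideal.mem_jacobson_bot]
    intro y
    have h3 := Ideal.mem_jacobson_bot.mp (h.jac ((hmem x).mp hx)) (φ y)
    have h4 := h3.map ψ
    rwa [map_add, map_mul, map_one, h2, h2] at h4
  · intro f hf a₀ ha₀ hu
    obtain ⟨a, ha, ha'⟩ := h.is_henselian (f.map φ) (hf.map _) (φ a₀)
      (by rw [Polynomial.eval_map_apply]; exact (hmem _).mp ha₀)
      (by
        rw [Polynomial.derivative_map, Polynomial.eval_map_apply]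
        exact hiu _ hu)
    refine ⟨ψ a, ?_, ?_⟩
    · have hfe : (f.map φ).map ψ = f := by
        rw [Polynomial.map_map, show ψ.comp φ = RingHom.id T from RingHom.ext h2, Polynomial.map_id]
      have := Polynomial.eval_map_apply (f := ψ) (p := f.map φ) (x := a)
      rw [hfe, ha.eq_zero, map_zero] at this
      exact this
    · have : ψ a - a₀ = ψ (a - φ a₀) := by rw [map_sub, h2]
      rw [this]
      exact Ideal.mem_map_of_mem _ ha'

theorem HenselianRing.of_ringEquiv {S T : Type*} [CommRing S] [CommRing T] (e : S ≃+* T)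
    (Is : Ideal S) (h : HenselianRing S Is) : HenselianRing T (Is.map (e : S →+* T)) :=
  HenselianRing.of_ringHom_inv (e : S →+* T) (e.symm : T →+* S) (by simp) (by simp) Is h


/-- `(H, J·H)` together with the map `σ : B → H` is the Henselization of the pair `(B, J)`. -/
structure IsHenselization {B : Type v} {H : Type v} [CommRing B] [CommRing H]
    (J : Ideal B) (σ : B →+* H) : Prop where
  henselian : HenselianRing H (J.map σ)
  universal : ∀ (C : Type u) [CommRing C] (K : Ideal C), HenselianRing C K →
    ∀ g : B →+* C, J.map g ≤ K → ∃! h : H →+* C, h.comp σ = g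

theorem IsHenselization.universal' {B Hh : Type v} [CommRing B] [CommRing Hh] {J : Ideal B}
    {σ : B →+* Hh} (h : IsHenselization.{u, v} J σ) (C : Type) [CommRing C] (K : Ideal C)
    (hC : HenselianRing C K) (g : B →+* C) (hg : J.map g ≤ K) :
    ∃! f : Hh →+* C, f.comp σ = g := by
  let e : C ≃+* ULift.{u} C := ULift.ringEquiv.symm
  haveI hC' : HenselianRing (ULift.{u} C) (K.map (e : C →+* ULift.{u} C)) :=
    HenselianRing.of_ringEquiv e K hC
  obtain ⟨f', hf', huniq⟩ := h.universal (ULift.{u} C) (K.map (e : C →+* ULift.{u} C)) hC'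
    ((e : C →+* ULift.{u} C).comp g)
    (by rw [← Ideal.map_map]; exact Ideal.map_mono hg)
  refine ⟨(e.symm : ULift.{u} C →+* C).comp f', ?_, ?_⟩
  · ext b
    have hb := RingHom.congr_fun hf' b
    simp only [RingHom.coe_comp, Function.comp_apply] at hb ⊢
    rw [hb]
    simp
  · intro f₁ h₁
    have h2 := huniq ((e : C →+* ULift.{u} C).comp f₁)
      (by
        ext b
        have hb := RingHom.congr_fun h₁ b
        simp only [RingHom.coe_comp, Function.comp_apply] at hb ⊢
        rw [hb])
    have h3 := RingHom.congr_fun h2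
    ext x
    have h4 := h3 x
    simp only [RingHom.coe_comp, Function.comp_apply] at h4 ⊢
    rw [← h4]
    simp


namespace St18

variable {A : Type} [CommRing A]

instance : SemilatticeSup {S : Subalgebra ℤ A // S.FG} :=
  { (inferInstance : PartialOrder {S : Subalgebra ℤ A // S.FG}) with
    sup := fun s t => ⟨s.1 ⊔ t.1, s.2.sup' t.2⟩
    le_sup_left := fun s t => (le_sup_left : s.1 ≤ s.1 ⊔ t.1)
    le_sup_right := fun s t => (le_sup_right : t.1 ≤ s.1 ⊔ t.1)
    sup_le := fun s t u h1 h2 => (sup_le h1 h2 : s.1 ⊔ t.1 ≤ u.1) }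

instance : Nonempty {S : Subalgebra ℤ A // S.FG} := ⟨⟨⊥, Subalgebra.fg_bot⟩⟩

variable (I : Ideal A)

/-- The ideal `I ∩ A_λ` of the subalgebra. -/
def idl (s : {S : Subalgebra ℤ A // S.FG}) : Ideal ↥s.1 :=
  I.comap (s.1.val : ↥s.1 →ₐ[ℤ] A).toRingHom

/-- inclusion ring hom between stages -/
def incl {s t : {S : Subalgebra ℤ A // S.FG}} (h : s ≤ t) : ↥s.1 →+* ↥t.1 :=
  (Subalgebra.inclusion h).toRingHom

/-- value ring hom to `A` -/
def vR (s : {S : Subalgebra ℤ A // S.FG}) : ↥s.1 →+* A :=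
  (s.1.val : ↥s.1 →ₐ[ℤ] A).toRingHom

theorem vR_incl {s t : {S : Subalgebra ℤ A // S.FG}} (h : s ≤ t) :
    (vR t).comp (incl h) = vR (A := A) s := RingHom.ext fun b => rfl

theorem incl_mem {s t : {S : Subalgebra ℤ A // S.FG}} (h : s ≤ t) {b : ↥s.1}
    (hb : b ∈ idl I s) : incl h b ∈ idl I t := hb

theorem incl_incl {s t u : {S : Subalgebra ℤ A // S.FG}} (h1 : s ≤ t) (h2 : t ≤ u) :
    (incl h2).comp (incl h1) = incl (A := A) (h1.trans h2) :=
  RingHom.ext fun b => Subtype.ext rfl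

theorem incl_refl (s : {S : Subalgebra ℤ A // S.FG}) :
    incl (le_refl s) = RingHom.id ↥s.1 := RingHom.ext fun b => Subtype.ext rfl

variable (H : {S : Subalgebra ℤ A // S.FG} → Type) [∀ s, CommRing (H s)]
  (σ : ∀ s : {S : Subalgebra ℤ A // S.FG}, (↥s.1) →+* H s)

/-- The ideal `I_λ^h = I_λ · A_λ^h`. -/
def Ih (s : {S : Subalgebra ℤ A // S.FG}) : Ideal (H s) := (idl I s).map (σ s)

theorem map_incl_le {s t : {S : Subalgebra ℤ A // S.FG}} (h : s ≤ t) :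
    (idl I s).map ((σ t).comp (incl h)) ≤ Ih I H σ t := by
  rw [Ideal.map_le_iff_le_comap]
  intro b hb
  exact Ideal.mem_map_of_mem _ (incl_mem I h hb)

variable (hσ : ∀ s : {S : Subalgebra ℤ A // S.FG},
    IsHenselization.{u} (idl I s) (σ s))

/-- transition maps between the Henselizations -/
noncomputable def rho (s t : {S : Subalgebra ℤ A // S.FG}) (h : s ≤ t) : H s →+* H t :=
  ((hσ s).universal' (H t) (Ih I H σ t) (hσ t).henselian ((σ t).comp (incl h))
    (map_incl_le I H σ h)).exists.choose

theorem rho_comp {s t : {S : Subalgebra ℤ A // S.FG}} (h : s ≤ t) :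
    (rho I H σ hσ s t h).comp (σ s) = (σ t).comp (incl h) :=
  ((hσ s).universal' (H t) (Ih I H σ t) (hσ t).henselian ((σ t).comp (incl h))
    (map_incl_le I H σ h)).exists.choose_spec

theorem rho_unique {s t : {S : Subalgebra ℤ A // S.FG}} (h : s ≤ t) (f : H s →+* H t)
    (hf : f.comp (σ s) = (σ t).comp (incl h)) : f = rho I H σ hσ s t h :=
  ((hσ s).universal' (H t) (Ih I H σ t) (hσ t).henselian ((σ t).comp (incl h))
    (map_incl_le I H σ h)).unique hf (rho_comp I H σ hσ h)

theorem rho_sigma {s t : {S : Subalgebra ℤ A // S.FG}} (h : s ≤ t) (b : ↥s.1) :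
    rho I H σ hσ s t h (σ s b) = σ t (incl h b) :=
  RingHom.congr_fun (rho_comp I H σ hσ h) b

theorem rho_refl (s : {S : Subalgebra ℤ A // S.FG}) :
    rho I H σ hσ s s (le_refl s) = RingHom.id (H s) :=
  (rho_unique I H σ hσ _ _ (by rw [RingHom.id_comp, incl_refl, RingHom.comp_id])).symm

theorem rho_rho {s t w : {S : Subalgebra ℤ A // S.FG}} (h1 : s ≤ t) (h2 : t ≤ w) :
    (rho I H σ hσ t w h2).comp (rho I H σ hσ s t h1) = rho I H σ hσ s w (h1.trans h2) :=
  rho_unique I H σ hσ _ _ (by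
    rw [RingHom.comp_assoc, rho_comp, ← RingHom.comp_assoc, rho_comp, RingHom.comp_assoc,
      incl_incl])

theorem rho_rho_apply {s t w : {S : Subalgebra ℤ A // S.FG}} (h1 : s ≤ t) (h2 : t ≤ w)
    (x : H s) :
    rho I H σ hσ t w h2 (rho I H σ hσ s t h1 x) = rho I H σ hσ s w (h1.trans h2) x :=
  RingHom.congr_fun (rho_rho I H σ hσ h1 h2) x

theorem rho_mem_Ih {s t : {S : Subalgebra ℤ A // S.FG}} (h : s ≤ t) {x : H s}
    (hx : x ∈ Ih I H σ s) : rho I H σ hσ s t h x ∈ Ih I H σ t := by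
  have : (Ih I H σ s).map (rho I H σ hσ s t h) ≤ Ih I H σ t := by
    rw [Ih, Ideal.map_map, rho_comp]
    exact map_incl_le I H σ h
  exact this (Ideal.mem_map_of_mem _ hx)


theorem directedSystem : DirectedSystem H (fun s t h => rho I H σ hσ s t h) :=
  ⟨fun s x => RingHom.congr_fun (rho_refl I H σ hσ s) x,
   fun _ _ _ h1 h2 x => rho_rho_apply I H σ hσ h1 h2 x⟩

/-- the colimit ring -/
noncomputable def RL : Type :=
  Ring.DirectLimit H (fun s t h => rho I H σ hσ s t h)

noncomputable instance : CommRing (RL I H σ hσ) :=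
  inferInstanceAs (CommRing (Ring.DirectLimit H (fun s t h => rho I H σ hσ s t h)))

/-- canonical maps into the colimit -/
noncomputable def iot (s : {S : Subalgebra ℤ A // S.FG}) : H s →+* RL I H σ hσ :=
  Ring.DirectLimit.of H (fun s t h => rho I H σ hσ s t h) s

theorem iot_rho {s t : {S : Subalgebra ℤ A // S.FG}} (h : s ≤ t) (x : H s) :
    iot I H σ hσ t (rho I H σ hσ s t h x) = iot I H σ hσ s x :=
  Ring.DirectLimit.of_f h x

theorem iot_exists (z : RL I H σ hσ) : ∃ s x, iot I H σ hσ s x = z :=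
  Ring.DirectLimit.exists_of z

theorem eq_descend {s t : {S : Subalgebra ℤ A // S.FG}} {x : H s} {y : H t}
    (h : iot I H σ hσ s x = iot I H σ hσ t y) :
    ∃ (w : _) (h1 : s ≤ w) (h2 : t ≤ w), rho I H σ hσ s w h1 x = rho I H σ hσ t w h2 y := by
  haveI := directedSystem I H σ hσ
  have h0 : iot I H σ hσ (s ⊔ t) (rho I H σ hσ s (s ⊔ t) le_sup_left x -
      rho I H σ hσ t (s ⊔ t) le_sup_right y) = 0 := by
    rw [map_sub, iot_rho, iot_rho, h, sub_self]
  obtain ⟨w, hw, hzero⟩ := Ring.DirectLimit.of.zero_exact h0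
  refine ⟨w, le_sup_left.trans hw, le_sup_right.trans hw, ?_⟩
  rw [map_sub, rho_rho_apply, rho_rho_apply, sub_eq_zero] at hzero
  exact hzero

theorem map_rho_le {s t : {S : Subalgebra ℤ A // S.FG}} (h : s ≤ t) :
    (Ih I H σ s).map (rho I H σ hσ s t h) ≤ Ih I H σ t := by
  rw [Ih, Ideal.map_map, rho_comp]
  exact map_incl_le I H σ h

/-- the colimit ideal -/
noncomputable def KK : Ideal (RL I H σ hσ) :=
  ⨆ s, (Ih I H σ s).map (iot I H σ hσ s)

theorem map_Ih_mono {s t : {S : Subalgebra ℤ A // S.FG}} (h : s ≤ t) :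
    (Ih I H σ s).map (iot I H σ hσ s) ≤ (Ih I H σ t).map (iot I H σ hσ t) := by
  have he : iot I H σ hσ s = (iot I H σ hσ t).comp (rho I H σ hσ s t h) :=
    RingHom.ext fun x => (iot_rho I H σ hσ h x).symm
  rw [he, ← Ideal.map_map]
  exact Ideal.map_mono (map_rho_le I H σ hσ h)

theorem mem_map_descend {s : {S : Subalgebra ℤ A // S.FG}} {z : RL I H σ hσ}
    (hz : z ∈ (Ih I H σ s).map (iot I H σ hσ s)) :
    ∃ (t : _) (_ : s ≤ t), ∃ k ∈ Ih I H σ t, iot I H σ hσ t k = z := by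
  refine Submodule.span_induction ?_ ?_ ?_ ?_ hz
  · rintro x ⟨k, hk, rfl⟩
    exact ⟨s, le_refl s, k, hk, rfl⟩
  · exact ⟨s, le_refl s, 0, zero_mem _, map_zero _⟩
  · rintro x y hx hy ⟨t₁, h₁, k₁, hk₁, rfl⟩ ⟨t₂, h₂, k₂, hk₂, rfl⟩
    refine ⟨t₁ ⊔ t₂, h₁.trans le_sup_left,
      rho I H σ hσ t₁ (t₁ ⊔ t₂) le_sup_left k₁ + rho I H σ hσ t₂ (t₁ ⊔ t₂) le_sup_right k₂,
      add_mem (rho_mem_Ih I H σ hσ _ hk₁) (rho_mem_Ih I H σ hσ _ hk₂), ?_⟩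
    rw [map_add, iot_rho, iot_rho]
  · rintro a x hx ⟨t₁, h₁, k₁, hk₁, rfl⟩
    obtain ⟨u, a', rfl⟩ := iot_exists I H σ hσ a
    refine ⟨t₁ ⊔ u, h₁.trans le_sup_left,
      rho I H σ hσ u (t₁ ⊔ u) le_sup_right a' * rho I H σ hσ t₁ (t₁ ⊔ u) le_sup_left k₁,
      Ideal.mul_mem_left _ _ (rho_mem_Ih I H σ hσ _ hk₁), ?_⟩
    rw [map_mul, iot_rho, iot_rho, smul_eq_mul]

theorem mem_KK {z : RL I H σ hσ} :
    z ∈ KK I H σ hσ ↔ ∃ s, ∃ k ∈ Ih I H σ s, iot I H σ hσ s k = z := by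
  constructor
  · intro hz
    rw [KK, Submodule.mem_iSup_of_directed _
      (fun s t => ⟨s ⊔ t, map_Ih_mono I H σ hσ le_sup_left,
        map_Ih_mono I H σ hσ le_sup_right⟩)] at hz
    obtain ⟨s, hs⟩ := hz
    obtain ⟨t, _, k, hk, rfl⟩ := mem_map_descend I H σ hσ hs
    exact ⟨t, k, hk, rfl⟩
  · rintro ⟨s, k, hk, rfl⟩
    exact le_iSup (fun s => (Ih I H σ s).map (iot I H σ hσ s)) s
      (Ideal.mem_map_of_mem _ hk)


theorem map_map_iot {s t : {S : Subalgebra ℤ A // S.FG}} (h : s ≤ t) (g : Polynomial (H s)) :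
    (g.map (rho I H σ hσ s t h)).map (iot I H σ hσ t) = g.map (iot I H σ hσ s) := by
  rw [Polynomial.map_map]
  congr 1
  exact RingHom.ext fun x => iot_rho I H σ hσ h x

theorem exists_monic (f : Polynomial (RL I H σ hσ)) (hf : f.Monic) :
    ∃ s g, Polynomial.Monic g ∧ g.map (iot I H σ hσ s) = f := by
  haveI := directedSystem I H σ hσ
  classical
  obtain ⟨s, p, hp0⟩ := Ring.DirectLimit.Polynomial.exists_of f
  have hp : p.map (iot I H σ hσ s) = f := hp0
  clear hp0
  set n := f.natDegree with hn
  refine ⟨s, Polynomial.X ^ n + ∑ i ∈ Finset.range n, Polynomial.monomial i (p.coeff i), ?_, ?_⟩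
  · apply Polynomial.monic_X_pow_add
    refine lt_of_le_of_lt (Polynomial.degree_sum_le _ _) ?_
    rw [Finset.sup_lt_iff (by exact_mod_cast WithBot.bot_lt_coe n)]
    intro i hi
    exact lt_of_le_of_lt (Polynomial.degree_monomial_le i _)
      (by exact_mod_cast Finset.mem_range.mp hi)
  · ext j
    rw [Polynomial.coeff_map, Polynomial.coeff_add, Polynomial.coeff_X_pow,
      Polynomial.finset_sum_coeff]
    simp only [Polynomial.coeff_monomial]
    rw [Finset.sum_ite_eq' (Finset.range n) j fun i => p.coeff i]
    rcases lt_trichotomy j n with hj | hj | hj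
    · rw [if_neg hj.ne, if_pos (Finset.mem_range.mpr hj), zero_add, ← Polynomial.coeff_map, hp]
    · subst hj
      rw [if_pos rfl, if_neg (by simp), add_zero, map_one]
      exact (hf.coeff_natDegree).symm
    · rw [if_neg hj.ne', if_neg (by simp [Nat.not_lt.mpr hj.le]), add_zero, map_zero]
      exact (Polynomial.coeff_eq_zero_of_natDegree_lt hj).symm

theorem henselian_KK : HenselianRing (RL I H σ hσ) (KK I H σ hσ) := by
  haveI := directedSystem I H σ hσ
  constructor
  · intro z hz
    rw [Ideal.mem_jacobson_bot]
    intro y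
    obtain ⟨s, k, hk, rfl⟩ := (mem_KK I H σ hσ).mp hz
    obtain ⟨t, y', rfl⟩ := iot_exists I H σ hσ y
    have he : iot I H σ hσ s k * iot I H σ hσ t y' + 1 =
        iot I H σ hσ (s ⊔ t) (rho I H σ hσ s (s ⊔ t) le_sup_left k *
          rho I H σ hσ t (s ⊔ t) le_sup_right y' + 1) := by
      rw [map_add, map_mul, map_one, iot_rho, iot_rho]
    rw [he]
    apply IsUnit.map
    exact Ideal.mem_jacobson_bot.mp
      ((hσ (s ⊔ t)).henselian.jac (rho_mem_Ih I H σ hσ le_sup_left hk)) _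
  · intro f hf a₀ ha₀ hu
    obtain ⟨s0, g0, hg0m, hg0⟩ := exists_monic I H σ hσ f hf
    obtain ⟨s1, b1, hb1⟩ := iot_exists I H σ hσ a₀
    set w₁ := s0 ⊔ s1 with hw₁
    set g₁ : Polynomial (H w₁) := g0.map (rho I H σ hσ s0 w₁ le_sup_left) with hg₁def
    set b₁ : H w₁ := rho I H σ hσ s1 w₁ le_sup_right b1 with hb₁def
    clear_value g₁ b₁
    have hg₁m : g₁.Monic := hg₁def ▸ hg0m.map _
    have hg₁ : g₁.map (iot I H σ hσ w₁) = f := by rw [hg₁def, map_map_iot, hg0]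
    have hb₁ : iot I H σ hσ w₁ b₁ = a₀ := by rw [hb₁def, iot_rho, hb1]
    obtain ⟨s2, k2, hk2, hk2e⟩ := (mem_KK I H σ hσ).mp ha₀
    have he2 : iot I H σ hσ w₁ (g₁.eval b₁) = iot I H σ hσ s2 k2 := by
      rw [hk2e, ← hg₁, ← hb₁, Polynomial.eval_map_apply]
    obtain ⟨w₂, hA, hB, heq2⟩ := eq_descend I H σ hσ he2
    set g₂ : Polynomial (H w₂) := g₁.map (rho I H σ hσ w₁ w₂ hA) with hg₂def
    set b₂ : H w₂ := rho I H σ hσ w₁ w₂ hA b₁ with hb₂def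
    clear_value g₂ b₂
    have hg₂m : g₂.Monic := hg₂def ▸ hg₁m.map _
    have hg₂ : g₂.map (iot I H σ hσ w₂) = f := by rw [hg₂def, map_map_iot, hg₁]
    have hb₂ : iot I H σ hσ w₂ b₂ = a₀ := by rw [hb₂def, iot_rho, hb₁]
    have hev₂ : g₂.eval b₂ ∈ Ih I H σ w₂ := by
      rw [hg₂def, hb₂def, Polynomial.eval_map_apply, heq2]
      exact rho_mem_Ih I H σ hσ hB hk2
    obtain ⟨c, hc⟩ := isUnit_mk_iff.mp hu
    obtain ⟨s3, c3, hc3⟩ := iot_exists I H σ hσ c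
    obtain ⟨s4, m4, hm4, hm4e⟩ := (mem_KK I H σ hσ).mp hc
    set w₃ := w₂ ⊔ s3 with hw₃
    set g₃ : Polynomial (H w₃) := g₂.map (rho I H σ hσ w₂ w₃ le_sup_left) with hg₃def
    set b₃ : H w₃ := rho I H σ hσ w₂ w₃ le_sup_left b₂ with hb₃def
    set c₃ : H w₃ := rho I H σ hσ s3 w₃ le_sup_right c3 with hc₃def
    clear_value g₃ b₃ c₃
    have hg₃m : g₃.Monic := hg₃def ▸ hg₂m.map _
    have hg₃ : g₃.map (iot I H σ hσ w₃) = f := by rw [hg₃def, map_map_iot, hg₂]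
    have hb₃ : iot I H σ hσ w₃ b₃ = a₀ := by rw [hb₃def, iot_rho, hb₂]
    have hev₃ : g₃.eval b₃ ∈ Ih I H σ w₃ := by
      rw [hg₃def, hb₃def, Polynomial.eval_map_apply]
      exact rho_mem_Ih I H σ hσ le_sup_left hev₂
    have hder : iot I H σ hσ w₃ (g₃.derivative.eval b₃) = f.derivative.eval a₀ := by
      rw [← hg₃, ← hb₃, Polynomial.derivative_map, Polynomial.eval_map_apply]
    have he4 : iot I H σ hσ w₃ (c₃ * g₃.derivative.eval b₃ - 1) = iot I H σ hσ s4 m4 := by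
      rw [hm4e, map_sub, map_mul, map_one, hder, hc₃def, iot_rho, hc3]
    obtain ⟨w₄, hC, hD, heq4⟩ := eq_descend I H σ hσ he4
    set g₄ : Polynomial (H w₄) := g₃.map (rho I H σ hσ w₃ w₄ hC) with hg₄def
    set b₄ : H w₄ := rho I H σ hσ w₃ w₄ hC b₃ with hb₄def
    set c₄ : H w₄ := rho I H σ hσ w₃ w₄ hC c₃ with hc₄def
    clear_value g₄ b₄ c₄
    have hg₄m : g₄.Monic := hg₄def ▸ hg₃m.map _
    have hg₄ : g₄.map (iot I H σ hσ w₄) = f := by rw [hg₄def, map_map_iot, hg₃]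
    have hb₄ : iot I H σ hσ w₄ b₄ = a₀ := by rw [hb₄def, iot_rho, hb₃]
    have hev₄ : g₄.eval b₄ ∈ Ih I H σ w₄ := by
      rw [hg₄def, hb₄def, Polynomial.eval_map_apply]
      exact rho_mem_Ih I H σ hσ hC hev₃
    have hder₄ : c₄ * g₄.derivative.eval b₄ - 1 ∈ Ih I H σ w₄ := by
      have hstep : c₄ * g₄.derivative.eval b₄ - 1 =
          rho I H σ hσ w₃ w₄ hC (c₃ * g₃.derivative.eval b₃ - 1) := by
        rw [map_sub, map_mul, map_one, hg₄def, hb₄def, hc₄def, Polynomial.derivative_map,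
          Polynomial.eval_map_apply]
      rw [hstep, heq4]
      exact rho_mem_Ih I H σ hσ hD hm4
    have hunit : IsUnit (Ideal.Quotient.mk (Ih I H σ w₄) (g₄.derivative.eval b₄)) :=
      isUnit_mk_iff.mpr ⟨c₄, hder₄⟩
    obtain ⟨r, hr, hr'⟩ := (hσ w₄).henselian.is_henselian g₄ hg₄m b₄ hev₄ hunit
    refine ⟨iot I H σ hσ w₄ r, ?_, ?_⟩
    · show f.eval (iot I H σ hσ w₄ r) = 0
      rw [← hg₄, Polynomial.eval_map_apply, hr.eq_zero, map_zero]
    · have hsub : iot I H σ hσ w₄ r - a₀ = iot I H σ hσ w₄ (r - b₄) := by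
        rw [map_sub, hb₄]
      rw [hsub]
      exact (mem_KK I H σ hσ).mpr ⟨w₄, r - b₄, hr', rfl⟩


/-- the finitely generated subalgebra generated by one element -/
def stg (a : A) : {S : Subalgebra ℤ A // S.FG} :=
  ⟨Algebra.adjoin ℤ {a}, ⟨{a}, by simp⟩⟩

theorem mem_stg (a : A) : a ∈ (stg a).1 := Algebra.subset_adjoin rfl

theorem iot_sigma_eq {s t : {S : Subalgebra ℤ A // S.FG}} (a : A) (ha : a ∈ s.1)
    (ha' : a ∈ t.1) :
    iot I H σ hσ s (σ s ⟨a, ha⟩) = iot I H σ hσ t (σ t ⟨a, ha'⟩) := by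
  have h1 : rho I H σ hσ s (s ⊔ t) le_sup_left (σ s ⟨a, ha⟩) =
      σ (s ⊔ t) ⟨a, (le_sup_left : s.1 ≤ s.1 ⊔ t.1) ha⟩ := by
    rw [rho_sigma]
    congr 1
  have h2 : rho I H σ hσ t (s ⊔ t) le_sup_right (σ t ⟨a, ha'⟩) =
      σ (s ⊔ t) ⟨a, (le_sup_left : s.1 ≤ s.1 ⊔ t.1) ha⟩ := by
    rw [rho_sigma]
    congr 1
  rw [← iot_rho I H σ hσ (le_sup_left : s ≤ s ⊔ t) (σ s ⟨a, ha⟩),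
    ← iot_rho I H σ hσ (le_sup_right : t ≤ s ⊔ t) (σ t ⟨a, ha'⟩), h1, h2]

/-- the comparison map `A → colim A_λ^h` -/
noncomputable def phi : A →+* RL I H σ hσ where
  toFun a := iot I H σ hσ (stg a) (σ (stg a) ⟨a, mem_stg a⟩)
  map_one' := by
    show iot I H σ hσ (stg (1 : A)) (σ (stg (1 : A)) ⟨1, mem_stg 1⟩) = 1
    rw [iot_sigma_eq I H σ hσ 1 (mem_stg 1) (one_mem (stg (1 : A)).1),
      show (⟨1, one_mem (stg (1 : A)).1⟩ : ↥(stg (1 : A)).1) = 1 from Subtype.ext rfl,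
      map_one, map_one]
  map_mul' a b := by
    show iot I H σ hσ (stg (a * b)) (σ (stg (a * b)) ⟨a * b, mem_stg (a * b)⟩) =
      iot I H σ hσ (stg a) (σ (stg a) ⟨a, mem_stg a⟩) *
      iot I H σ hσ (stg b) (σ (stg b) ⟨b, mem_stg b⟩)
    have hma : a ∈ (stg a ⊔ stg b).1 := (le_sup_left : (stg a).1 ≤ _) (mem_stg a)
    have hmb : b ∈ (stg a ⊔ stg b).1 := (le_sup_right : (stg b).1 ≤ _) (mem_stg b)
    rw [iot_sigma_eq I H σ hσ (a * b) (mem_stg (a * b)) (mul_mem hma hmb),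
      iot_sigma_eq I H σ hσ a (mem_stg a) hma, iot_sigma_eq I H σ hσ b (mem_stg b) hmb,
      ← map_mul, ← map_mul]
    congr 1
  map_zero' := by
    show iot I H σ hσ (stg (0 : A)) (σ (stg (0 : A)) ⟨0, mem_stg 0⟩) = 0
    rw [iot_sigma_eq I H σ hσ 0 (mem_stg 0) (zero_mem (stg (0 : A)).1),
      show (⟨0, zero_mem (stg (0 : A)).1⟩ : ↥(stg (0 : A)).1) = 0 from Subtype.ext rfl,
      map_zero, map_zero]
  map_add' a b := by
    show iot I H σ hσ (stg (a + b)) (σ (stg (a + b)) ⟨a + b, mem_stg (a + b)⟩) =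
      iot I H σ hσ (stg a) (σ (stg a) ⟨a, mem_stg a⟩) +
      iot I H σ hσ (stg b) (σ (stg b) ⟨b, mem_stg b⟩)
    have hma : a ∈ (stg a ⊔ stg b).1 := (le_sup_left : (stg a).1 ≤ _) (mem_stg a)
    have hmb : b ∈ (stg a ⊔ stg b).1 := (le_sup_right : (stg b).1 ≤ _) (mem_stg b)
    rw [iot_sigma_eq I H σ hσ (a + b) (mem_stg (a + b)) (add_mem hma hmb),
      iot_sigma_eq I H σ hσ a (mem_stg a) hma, iot_sigma_eq I H σ hσ b (mem_stg b) hmb,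
      ← map_add, ← map_add]
    congr 1

theorem phi_apply {s : {S : Subalgebra ℤ A // S.FG}} (b : ↥s.1) :
    phi I H σ hσ (b : A) = iot I H σ hσ s (σ s b) := by
  show iot I H σ hσ (stg (b : A)) (σ _ ⟨(b : A), mem_stg _⟩) = _
  rw [iot_sigma_eq I H σ hσ (b : A) (mem_stg _) b.2]

variable (τ : ∀ s, H s →+* A)

theorem phi_tau (hτ : ∀ s : {S : Subalgebra ℤ A // S.FG}, (τ s).comp (σ s) = vR s)
    (s : {S : Subalgebra ℤ A // S.FG}) :
    (phi I H σ hσ).comp (τ s) = iot I H σ hσ s := by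
  have hle : (idl I s).map ((iot I H σ hσ s).comp (σ s)) ≤ KK I H σ hσ := by
    rw [← Ideal.map_map]
    exact le_trans (Ideal.map_mono (le_refl _))
      (le_iSup (fun s => (Ih I H σ s).map (iot I H σ hσ s)) s)
  refine ((hσ s).universal' (RL I H σ hσ) (KK I H σ hσ) (henselian_KK I H σ hσ)
    ((iot I H σ hσ s).comp (σ s)) hle).unique ?_ rfl
  ext b
  have h1 := RingHom.congr_fun (hτ s) b
  simp only [RingHom.coe_comp, Function.comp_apply] at h1 ⊢
  rw [h1]
  show phi I H σ hσ (b : A) = _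
  rw [phi_apply]

theorem tau_rho [HenselianRing A I]
    (hτ : ∀ s : {S : Subalgebra ℤ A // S.FG}, (τ s).comp (σ s) = vR s)
    {s t : {S : Subalgebra ℤ A // S.FG}} (h : s ≤ t) :
    (τ t).comp (rho I H σ hσ s t h) = τ s := by
  have hle : (idl I s).map (vR s) ≤ I := Ideal.map_comap_le
  refine ((hσ s).universal' A I inferInstance (vR s) hle).unique ?_ (hτ s)
  rw [RingHom.comp_assoc, rho_comp, ← RingHom.comp_assoc, hτ t, vR_incl]

end St18

/-- Let `(A, I)` be a Henselian pair, written as the filtered union of its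
finitely generated `ℤ`-subalgebras `A_λ`, with `I_λ = I ∩ A_λ` and `(A_λ^h, I_λ^h)` the
Henselization of `(A_λ, I_λ)`. The canonical maps `τ_λ : A_λ^h → A` (obtained since `(A, I)` is
Henselian) exhibit `A = colim A_λ^h` and `I = colim I_λ^h`: every element of `A` (resp. of `I`)
comes from some `A_λ^h` (resp. from `I_λ^h`), and any two elements of some `A_λ^h` that become
equal in `A` already become equal at a finite stage of the system. -/
theorem henselian_pair_is_colimit_of_henselizations_of_fg_subalgebras
    {A : Type} [CommRing A] (I : Ideal A) [HenselianRing A I]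
    (H : {S : Subalgebra ℤ A // S.FG} → Type)
    [∀ s, CommRing (H s)]
    (σ : ∀ s : {S : Subalgebra ℤ A // S.FG}, (↥s.1) →+* H s)
    (hσ : ∀ s : {S : Subalgebra ℤ A // S.FG},
      IsHenselization (I.comap (s.1.val : ↥s.1 →ₐ[ℤ] A).toRingHom) (σ s))
    (τ : ∀ s, H s →+* A)
    (hτ : ∀ s : {S : Subalgebra ℤ A // S.FG},
      (τ s).comp (σ s) = (s.1.val : ↥s.1 →ₐ[ℤ] A).toRingHom) :
    (∀ a : A, ∃ s x, τ s x = a) ∧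
    (∀ a ∈ I, ∃ s, ∃ x ∈ Ideal.map (σ s)
        (I.comap ((s.1.val : ↥s.1 →ₐ[ℤ] A)).toRingHom), τ s x = a) ∧
    (∀ (s : {S : Subalgebra ℤ A // S.FG}) (x y : H s), τ s x = τ s y →
      ∃ (t : {S : Subalgebra ℤ A // S.FG}) (hst : s.1 ≤ t.1) (ρ : H s →+* H t),
        ρ.comp (σ s) = (σ t).comp (Subalgebra.inclusion hst).toRingHom ∧
        (τ t).comp ρ = τ s ∧ ρ x = ρ y) := by
  refine ⟨?_, ?_, ?_⟩
  · intro a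
    refine ⟨St18.stg a, σ _ ⟨a, St18.mem_stg a⟩, ?_⟩
    have h1 := RingHom.congr_fun (hτ (St18.stg a)) ⟨a, St18.mem_stg a⟩
    simpa using h1
  · intro a ha
    refine ⟨St18.stg a, σ _ ⟨a, St18.mem_stg a⟩, Ideal.mem_map_of_mem _ ?_, ?_⟩
    · exact ha
    · have h1 := RingHom.congr_fun (hτ (St18.stg a)) ⟨a, St18.mem_stg a⟩
      simpa using h1
  · intro s x y hxy
    have hphi := St18.phi_tau I H σ hσ τ hτ s
    have hx := RingHom.congr_fun hphi x
    have hy := RingHom.congr_fun hphi y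
    simp only [RingHom.coe_comp, Function.comp_apply] at hx hy
    have h1 : St18.iot I H σ hσ s x = St18.iot I H σ hσ s y := by
      rw [← hx, ← hy, hxy]
    obtain ⟨w, h1', h2', heq⟩ := St18.eq_descend I H σ hσ h1
    refine ⟨w, h1', St18.rho I H σ hσ s w h1', ?_, ?_, ?_⟩
    · exact St18.rho_comp I H σ hσ h1'
    · exact St18.tau_rho I H σ hσ τ hτ h1'
    · exact heq
end
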